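/- Every realizable list {λ₁, λ₂, λ₃, λ₄} of four real numbers (i.e., the spectrum of some 4×4 entrywise nonnegative matrix) is also the spectrum of a 4×4 centrosymmetric nonnegative matrix. -/

import Mathlib

set_option maxHeartbeats 1000000

open Matrix Polynomial

/-- The n×n exchange (counteridentity) matrix. -/
def Jmat (n : ℕ) : Matrix (Fin n) (Fin n) ℝ :=
  Matrix.of fun i j => if (i : ℕ) + (j : ℕ) = n - 1 then 1 else 0


lemma det_fin_four' {R : Type*} [CommRing R] (M : Matrix (Fin 4) (Fin 4) R) : M.det =
    M 0 0*(M 1 1*(M 2 2*M 3 3-M 2 3*M 3 2) - M 1 2*(M 2 1*M 3 3-M 2 3*M 3 1) + M 1 3*(M 2 1*M 3 2-M 2 2*M 3 1))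
    - M 0 1*(M 1 0*(M 2 2*M 3 3-M 2 3*M 3 2) - M 1 2*(M 2 0*M 3 3-M 2 3*M 3 0) + M 1 3*(M 2 0*M 3 2-M 2 2*M 3 0))
    + M 0 2*(M 1 0*(M 2 1*M 3 3-M 2 3*M 3 1) - M 1 1*(M 2 0*M 3 3-M 2 3*M 3 0) + M 1 3*(M 2 0*M 3 1-M 2 1*M 3 0))
    - M 0 3*(M 1 0*(M 2 1*M 3 2-M 2 2*M 3 1) - M 1 1*(M 2 0*M 3 2-M 2 2*M 3 0) + M 1 2*(M 2 0*M 3 1-M 2 1*M 3 0)) := by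
  have h : M = !![M 0 0, M 0 1, M 0 2, M 0 3; M 1 0, M 1 1, M 1 2, M 1 3;
      M 2 0, M 2 1, M 2 2, M 2 3; M 3 0, M 3 1, M 3 2, M 3 3] := by
    ext i j; fin_cases i <;> fin_cases j <;> simp
  rw [h]
  simp [Matrix.det_succ_row_zero, Fin.sum_univ_succ, Fin.succAbove]
  ring

lemma charpoly_fin4 (A : Matrix (Fin 4) (Fin 4) ℝ) : A.charpoly =
    X^4 - C (A 0 0 + A 1 1 + A 2 2 + A 3 3) * X^3
    + C ((A 0 0*A 1 1 - A 0 1*A 1 0) + (A 0 0*A 2 2 - A 0 2*A 2 0) + (A 0 0*A 3 3 - A 0 3*A 3 0) + (A 1 1*A 2 2 - A 1 2*A 2 1) + (A 1 1*A 3 3 - A 1 3*A 3 1) + (A 2 2*A 3 3 - A 2 3*A 3 2)) * X^2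
    - C ((A 0 0*(A 1 1*A 2 2 - A 1 2*A 2 1) - A 0 1*(A 1 0*A 2 2 - A 1 2*A 2 0) + A 0 2*(A 1 0*A 2 1 - A 1 1*A 2 0)) + (A 0 0*(A 1 1*A 3 3 - A 1 3*A 3 1) - A 0 1*(A 1 0*A 3 3 - A 1 3*A 3 0) + A 0 3*(A 1 0*A 3 1 - A 1 1*A 3 0)) + (A 0 0*(A 2 2*A 3 3 - A 2 3*A 3 2) - A 0 2*(A 2 0*A 3 3 - A 2 3*A 3 0) + A 0 3*(A 2 0*A 3 2 - A 2 2*A 3 0)) + (A 1 1*(A 2 2*A 3 3 - A 2 3*A 3 2) - A 1 2*(A 2 1*A 3 3 - A 2 3*A 3 1) + A 1 3*(A 2 1*A 3 2 - A 2 2*A 3 1))) * X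
    + C (A 0 0*(A 1 1*(A 2 2*A 3 3-A 2 3*A 3 2) - A 1 2*(A 2 1*A 3 3-A 2 3*A 3 1) + A 1 3*(A 2 1*A 3 2-A 2 2*A 3 1))
    - A 0 1*(A 1 0*(A 2 2*A 3 3-A 2 3*A 3 2) - A 1 2*(A 2 0*A 3 3-A 2 3*A 3 0) + A 1 3*(A 2 0*A 3 2-A 2 2*A 3 0))
    + A 0 2*(A 1 0*(A 2 1*A 3 3-A 2 3*A 3 1) - A 1 1*(A 2 0*A 3 3-A 2 3*A 3 0) + A 1 3*(A 2 0*A 3 1-A 2 1*A 3 0))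
    - A 0 3*(A 1 0*(A 2 1*A 3 2-A 2 2*A 3 1) - A 1 1*(A 2 0*A 3 2-A 2 2*A 3 0) + A 1 2*(A 2 0*A 3 1-A 2 1*A 3 0))) := by
  rw [Matrix.charpoly, det_fin_four']
  simp only [charmatrix_apply, Matrix.diagonal_apply, Fin.reduceEq, if_true, if_false,
    reduceIte, C_add, C_sub, C_mul]
  ring

lemma prod_expand (l : Fin 4 → ℝ) : ∏ i, (X - C (l i)) =
    X^4 - C (l 0 + l 1 + l 2 + l 3) * X^3
    + C (l 0*l 1 + l 0*l 2 + l 0*l 3 + l 1*l 2 + l 1*l 3 + l 2*l 3) * X^2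
    - C (l 0*l 1*l 2 + l 0*l 1*l 3 + l 0*l 2*l 3 + l 1*l 2*l 3) * X
    + C (l 0*l 1*l 2*l 3) := by
  rw [Fin.prod_univ_four]; simp only [C_add, C_mul]; ring


lemma trace_sq4 (A : Matrix (Fin 4) (Fin 4) ℝ) : (A*A).trace =
    (A 0 0 + A 1 1 + A 2 2 + A 3 3)^2
    - 2*((A 0 0*A 1 1 - A 0 1*A 1 0) + (A 0 0*A 2 2 - A 0 2*A 2 0) + (A 0 0*A 3 3 - A 0 3*A 3 0) + (A 1 1*A 2 2 - A 1 2*A 2 1) + (A 1 1*A 3 3 - A 1 3*A 3 1) + (A 2 2*A 3 3 - A 2 3*A 3 2)) := by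
  simp [Matrix.trace, Matrix.mul_apply, Fin.sum_univ_four, Matrix.diag]
  ring

lemma trace_cube4 (A : Matrix (Fin 4) (Fin 4) ℝ) : (A*A*A).trace =
    (A 0 0 + A 1 1 + A 2 2 + A 3 3)^3
    - 3*(A 0 0 + A 1 1 + A 2 2 + A 3 3)*((A 0 0*A 1 1 - A 0 1*A 1 0) + (A 0 0*A 2 2 - A 0 2*A 2 0) + (A 0 0*A 3 3 - A 0 3*A 3 0) + (A 1 1*A 2 2 - A 1 2*A 2 1) + (A 1 1*A 3 3 - A 1 3*A 3 1) + (A 2 2*A 3 3 - A 2 3*A 3 2))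
    + 3*((A 0 0*(A 1 1*A 2 2 - A 1 2*A 2 1) - A 0 1*(A 1 0*A 2 2 - A 1 2*A 2 0) + A 0 2*(A 1 0*A 2 1 - A 1 1*A 2 0)) + (A 0 0*(A 1 1*A 3 3 - A 1 3*A 3 1) - A 0 1*(A 1 0*A 3 3 - A 1 3*A 3 0) + A 0 3*(A 1 0*A 3 1 - A 1 1*A 3 0)) + (A 0 0*(A 2 2*A 3 3 - A 2 3*A 3 2) - A 0 2*(A 2 0*A 3 3 - A 2 3*A 3 0) + A 0 3*(A 2 0*A 3 2 - A 2 2*A 3 0)) + (A 1 1*(A 2 2*A 3 3 - A 2 3*A 3 2) - A 1 2*(A 2 1*A 3 3 - A 2 3*A 3 1) + A 1 3*(A 2 1*A 3 2 - A 2 2*A 3 1))) := by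
  simp [Matrix.trace, Matrix.mul_apply, Fin.sum_univ_four, Matrix.diag, Finset.sum_mul]
  ring

lemma trace_pow_eq_sum (A : Matrix (Fin 4) (Fin 4) ℝ) (l : Fin 4 → ℝ)
    (h : A.charpoly = ∏ i, (X - C (l i))) (k : ℕ) :
    (A^k).trace = (l 0)^k + (l 1)^k + (l 2)^k + (l 3)^k := by
  have hp : A.charpoly = X^4 - C (l 0 + l 1 + l 2 + l 3) * X^3
      + C (l 0*l 1 + l 0*l 2 + l 0*l 3 + l 1*l 2 + l 1*l 3 + l 2*l 3) * X^2
      - C (l 0*l 1*l 2 + l 0*l 1*l 3 + l 0*l 2*l 3 + l 1*l 2*l 3) * X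
      + C (l 0*l 1*l 2*l 3) := h.trans (prod_expand l)
  have heq := (charpoly_fin4 A).symm.trans hp
  have he1 : A 0 0 + A 1 1 + A 2 2 + A 3 3 = l 0 + l 1 + l 2 + l 3 := by
    have := congrArg (fun p => coeff p 3) heq
    simp only [coeff_add, coeff_sub, coeff_C_mul, coeff_X_pow, coeff_C, coeff_X] at this
    norm_num at this; linarith
  have he2 : (A 0 0*A 1 1 - A 0 1*A 1 0) + (A 0 0*A 2 2 - A 0 2*A 2 0) + (A 0 0*A 3 3 - A 0 3*A 3 0) + (A 1 1*A 2 2 - A 1 2*A 2 1) + (A 1 1*A 3 3 - A 1 3*A 3 1) + (A 2 2*A 3 3 - A 2 3*A 3 2)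
      = l 0*l 1 + l 0*l 2 + l 0*l 3 + l 1*l 2 + l 1*l 3 + l 2*l 3 := by
    have := congrArg (fun p => coeff p 2) heq
    simp only [coeff_add, coeff_sub, coeff_C_mul, coeff_X_pow, coeff_C, coeff_X] at this
    norm_num at this; linarith
  have he3 : (A 0 0*(A 1 1*A 2 2 - A 1 2*A 2 1) - A 0 1*(A 1 0*A 2 2 - A 1 2*A 2 0) + A 0 2*(A 1 0*A 2 1 - A 1 1*A 2 0)) + (A 0 0*(A 1 1*A 3 3 - A 1 3*A 3 1) - A 0 1*(A 1 0*A 3 3 - A 1 3*A 3 0) + A 0 3*(A 1 0*A 3 1 - A 1 1*A 3 0)) + (A 0 0*(A 2 2*A 3 3 - A 2 3*A 3 2) - A 0 2*(A 2 0*A 3 3 - A 2 3*A 3 0) + A 0 3*(A 2 0*A 3 2 - A 2 2*A 3 0)) + (A 1 1*(A 2 2*A 3 3 - A 2 3*A 3 2) - A 1 2*(A 2 1*A 3 3 - A 2 3*A 3 1) + A 1 3*(A 2 1*A 3 2 - A 2 2*A 3 1))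
      = l 0*l 1*l 2 + l 0*l 1*l 3 + l 0*l 2*l 3 + l 1*l 2*l 3 := by
    have := congrArg (fun p => coeff p 1) heq
    simp only [coeff_add, coeff_sub, coeff_C_mul, coeff_X_pow, coeff_C, coeff_X] at this
    norm_num at this; linarith
  have h4 : A^4 = (l 0 + l 1 + l 2 + l 3) • A^3
      - (l 0*l 1 + l 0*l 2 + l 0*l 3 + l 1*l 2 + l 1*l 3 + l 2*l 3) • A^2
      + (l 0*l 1*l 2 + l 0*l 1*l 3 + l 0*l 2*l 3 + l 1*l 2*l 3) • A
      - (l 0*l 1*l 2*l 3) • 1 := by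
    have hCH := Matrix.aeval_self_charpoly A
    rw [hp] at hCH
    simp only [map_sub, map_add, _root_.map_mul, map_pow, aeval_X, aeval_C,
      Algebra.algebraMap_eq_smul_one, smul_mul_assoc, one_mul, add_mul, smul_smul] at hCH
    rw [← sub_eq_zero, ← hCH]; module
  have hrec : ∀ m : ℕ, (A^(m+4)).trace
      = (l 0 + l 1 + l 2 + l 3) * (A^(m+3)).trace
      - (l 0*l 1 + l 0*l 2 + l 0*l 3 + l 1*l 2 + l 1*l 3 + l 2*l 3) * (A^(m+2)).trace
      + (l 0*l 1*l 2 + l 0*l 1*l 3 + l 0*l 2*l 3 + l 1*l 2*l 3) * (A^(m+1)).trace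
      - (l 0*l 1*l 2*l 3) * (A^m).trace := by
    intro m
    have hsplit : A^(m+4) = A^m * A^4 := by rw [← pow_add]
    rw [hsplit, h4]
    simp only [mul_sub, mul_add, mul_smul_comm, mul_one, trace_sub, trace_add, trace_smul,
      smul_eq_mul, ← pow_add, ← pow_succ]
  induction k using Nat.strong_induction_on with
  | _ k ih =>
    rcases k with _|_|_|_|m
    · norm_num
    · simpa [Matrix.trace, Fin.sum_univ_four, Matrix.diag] using he1
    · rw [pow_two, trace_sq4, he1, he2]; ring
    · rw [pow_succ, pow_two, trace_cube4, he1, he2, he3]; ring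
    · rw [show m+1+1+1+1 = m+4 by omega, hrec m,
        ih (m+3) (by omega), ih (m+2) (by omega), ih (m+1) (by omega), ih m (by omega)]
      have hr : ∀ x : ℝ, x^(m+4) = x^m * x^4 := fun x => by rw [← pow_add]
      have hroot : ∀ x : ℝ, (x - l 0)*(x - l 1)*(x - l 2)*(x - l 3) + (l 0 + l 1 + l 2 + l 3) * x^3
          - (l 0*l 1 + l 0*l 2 + l 0*l 3 + l 1*l 2 + l 1*l 3 + l 2*l 3) * x^2
          + (l 0*l 1*l 2 + l 0*l 1*l 3 + l 0*l 2*l 3 + l 1*l 2*l 3) * x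
          - l 0*l 1*l 2*l 3 = x^4 := by
        intro x; ring
      have h0 := hroot (l 0); have h1 := hroot (l 1); have h2 := hroot (l 2); have h3 := hroot (l 3)
      simp only [hr]
      linear_combination (l 0)^m * h0 + (l 1)^m * h1 + (l 2)^m * h2 + (l 3)^m * h3

lemma pow_entry_nonneg (A : Matrix (Fin 4) (Fin 4) ℝ) (hA : ∀ i j, 0 ≤ A i j) :
    ∀ (k : ℕ) (i j : Fin 4), 0 ≤ (A^k) i j := by
  intro k
  induction k with
  | zero => intro i j; simp [Matrix.one_apply]; positivity
  | succ n ih =>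
    intro i j
    rw [pow_succ, Matrix.mul_apply]
    exact Finset.sum_nonneg fun m _ => mul_nonneg (ih i m) (hA m j)

lemma perron_bound (l : Fin 4 → ℝ) (h : ∀ k : ℕ, 0 ≤ ∑ i, l i ^ k) (j : Fin 4) :
    -(l j) ≤ max (max (l 0) (l 1)) (max (l 2) (l 3)) := by
  set M := max (max (l 0) (l 1)) (max (l 2) (l 3)) with hM
  by_contra hc
  push_neg at hc
  set m := -(l j) with hmdef
  have hlj : l j = -m := by rw [hmdef]; ring
  have hMl : ∀ i : Fin 4, l i ≤ M := by
    intro i; fin_cases i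
    · exact le_trans (le_max_left _ _) (le_max_left _ _)
    · exact le_trans (le_max_right _ _) (le_max_left _ _)
    · exact le_trans (le_max_left _ _) (le_max_right _ _)
    · exact le_trans (le_max_right _ _) (le_max_right _ _)
  have hm0 : 0 < m := by
    have := hMl j; rw [hlj] at this
    nlinarith [hc]
  set c := max M 0 with hcdef
  have hc0 : 0 ≤ c := le_max_right _ _
  have hcm : c < m := by
    rw [hcdef]; exact max_lt hc hm0
  have hb : ∀ (n : ℕ) (i : Fin 4), Odd n → l i ^ n ≤ c ^ n := by
    intro n i hn
    rcases le_or_gt (l i) 0 with hle | hlt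
    · exact le_trans (hn.pow_nonpos hle) (pow_nonneg hc0 n)
    · exact pow_le_pow_left₀ hlt.le (le_trans (hMl i) (le_max_left _ _)) n
  have key : ∀ n : ℕ, Odd n → m ^ n ≤ 3 * c ^ n := by
    intro n hn
    have hsum := h n
    have hsplit : ∑ i ∈ (Finset.univ.erase j), l i ^ n + l j ^ n = ∑ i, l i ^ n :=
      Finset.sum_erase_add _ _ (Finset.mem_univ j)
    have hbound : ∑ i ∈ (Finset.univ.erase j), l i ^ n ≤ 3 * c ^ n := by
      have := Finset.sum_le_card_nsmul (Finset.univ.erase j) (fun i => l i ^ n) (c ^ n)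
        (fun i _ => hb n i hn)
      rwa [Finset.card_erase_of_mem (Finset.mem_univ j), Finset.card_univ, Fintype.card_fin,
        show (4:ℕ) - 1 = 3 from rfl, nsmul_eq_mul, Nat.cast_ofNat] at this
    have hjn : l j ^ n = -(m ^ n) := by rw [hlj, hn.neg_pow]
    linarith
  obtain ⟨n, hn⟩ := exists_pow_lt_of_lt_one (show (0:ℝ) < 1/3 by norm_num)
    (show c / m < 1 by rw [div_lt_one hm0]; exact hcm)
  have hdiv : c ^ n / m ^ n < 1/3 := by rwa [← div_pow]
  have hmn : (0:ℝ) < m ^ n := pow_pos hm0 n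
  have h4 : 3 * c ^ n < m ^ n := by
    rw [div_lt_div_iff₀ hmn (by norm_num)] at hdiv; linarith
  have hkey := key (2*n+1) ⟨n, by omega⟩
  have hsplit2 : m ^ (2*n+1) = m ^ n * m ^ (n+1) := by rw [← pow_add]; congr 1; omega
  have hsplit3 : c ^ (2*n+1) = c ^ n * c ^ (n+1) := by rw [← pow_add]; congr 1; omega
  have h5 : c ^ (n+1) ≤ m ^ (n+1) := pow_le_pow_left₀ hc0 hcm.le _
  nlinarith [pow_nonneg hc0 n, pow_nonneg hc0 (n+1), pow_pos hm0 (n+1)]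

lemma construct (a b c d : ℝ) (hdc : d ≤ c) (hcb : c ≤ b) (hba : b ≤ a)
    (had : 0 ≤ a + d) (hs : 0 ≤ a + b + c + d) :
    ∃ M : Matrix (Fin 4) (Fin 4) ℝ, Jmat 4 * M * Jmat 4 = M ∧ (∀ i j, 0 ≤ M i j) ∧
      M.charpoly = (X - C a) * (X - C b) * (X - C c) * (X - C d) := by
  set x1 : ℝ := max |c| b with hx1def
  set x2 : ℝ := a + b - x1 with hx2def
  set u : ℝ := x1 * x2 - a * b with hudef
  have hca : |c| ≤ a := abs_le.2 ⟨by linarith, by linarith⟩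
  have hda : |d| ≤ a := abs_le.2 ⟨by linarith, by linarith⟩
  have hcx1 : |c| ≤ x1 := le_max_left _ _
  have hbx1 : b ≤ x1 := le_max_right _ _
  have hx1a : x1 ≤ a := max_le hca hba
  have hcd_ab : |c| + |d| ≤ a + b := by
    rcases abs_cases c with ⟨hc1, hc2⟩ | ⟨hc1, hc2⟩ <;>
      rcases abs_cases d with ⟨hd1, hd2⟩ | ⟨hd1, hd2⟩ <;> linarith [abs_nonneg c]
  have hdx2 : |d| ≤ x2 := by
    rw [hx2def]
    have : x1 ≤ a + b - |d| := max_le (by linarith) (by linarith)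
    linarith
  have hu : 0 ≤ u := by
    have h1 : 0 ≤ (a - x1) * (x1 - b) := mul_nonneg (by linarith) (by linarith)
    rw [hudef, hx2def]; nlinarith
  have hc' := abs_le.1 hcx1
  have hd' := abs_le.1 hdx2
  refine ⟨!![(x1+c)/2, u/2, u/2, (x1-c)/2;
             1/2, (x2+d)/2, (x2-d)/2, 1/2;
             1/2, (x2-d)/2, (x2+d)/2, 1/2;
             (x1-c)/2, u/2, u/2, (x1+c)/2], ?_, ?_, ?_⟩
  · ext i j
    fin_cases i <;> fin_cases j <;>
      simp [Jmat, Matrix.mul_apply, Fin.sum_univ_four,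
        show ((0:Fin 4):ℕ) = 0 from rfl, show ((1:Fin 4):ℕ) = 1 from rfl,
        show ((2:Fin 4):ℕ) = 2 from rfl, show ((3:Fin 4):ℕ) = 3 from rfl]
  · intro i j
    fin_cases i <;> fin_cases j <;> simp <;> linarith
  · rw [charpoly_fin4]
    apply Polynomial.funext
    intro r
    simp [eval_mul, eval_pow]
    ring_nf
    rw [hudef, hx2def]; ring

theorem realizable_four_reals_centrosymmetric_realizable (l : Fin 4 → ℝ)
    (hreal : ∃ A : Matrix (Fin 4) (Fin 4) ℝ, (∀ i j, 0 ≤ A i j) ∧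
      A.charpoly = ∏ i, (X - C (l i))) :
    ∃ M : Matrix (Fin 4) (Fin 4) ℝ, Jmat 4 * M * Jmat 4 = M ∧ (∀ i j, 0 ≤ M i j) ∧
      M.charpoly = ∏ i, (X - C (l i)) := by
  obtain ⟨A, hA, hchar⟩ := hreal
  have htr : ∀ k : ℕ, 0 ≤ ∑ i, l i ^ k := by
    intro k
    have h1 := trace_pow_eq_sum A l hchar k
    have h2 : 0 ≤ (A^k).trace := by
      rw [Matrix.trace]
      exact Finset.sum_nonneg fun i _ => pow_entry_nonneg A hA k i i
    rw [h1] at h2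
    rw [Fin.sum_univ_four]
    exact h2
  set σ := Tuple.sort l with hσ
  have hmono := Tuple.monotone_sort l
  have h01 : l (σ 0) ≤ l (σ 1) := hmono (show (0:Fin 4) ≤ 1 by decide)
  have h12 : l (σ 1) ≤ l (σ 2) := hmono (show (1:Fin 4) ≤ 2 by decide)
  have h23 : l (σ 2) ≤ l (σ 3) := hmono (show (2:Fin 4) ≤ 3 by decide)
  have htop : ∀ j : Fin 4, l j ≤ l (σ 3) := by
    intro j
    have h1 : l (σ (σ.symm j)) = l j := by rw [Equiv.apply_symm_apply]
    rw [← h1]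
    exact hmono (show σ.symm j ≤ 3 from Fin.le_last _)
  have hsum : 0 ≤ l (σ 3) + l (σ 2) + l (σ 1) + l (σ 0) := by
    have := htr 1
    rw [Fin.sum_univ_four] at this
    simp only [pow_one] at this
    have hsc : l (σ 0) + l (σ 1) + l (σ 2) + l (σ 3) = l 0 + l 1 + l 2 + l 3 := by
      have := Equiv.sum_comp σ l
      rw [Fin.sum_univ_four, Fin.sum_univ_four] at this
      linarith [this]
    linarith
  have had : 0 ≤ l (σ 3) + l (σ 0) := by
    have hp := perron_bound l htr (σ 0)
    have hmax : max (max (l 0) (l 1)) (max (l 2) (l 3)) ≤ l (σ 3) :=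
      max_le (max_le (htop 0) (htop 1)) (max_le (htop 2) (htop 3))
    linarith
  obtain ⟨M, hcs, hM, hcp⟩ := construct (l (σ 3)) (l (σ 2)) (l (σ 1)) (l (σ 0))
    h01 h12 h23 had hsum
  refine ⟨M, hcs, hM, ?_⟩
  rw [hcp]
  have hprod := Equiv.prod_comp σ (fun j => X - C (l j))
  rw [Fin.prod_univ_four] at hprod
  rw [← hprod]
  ring
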